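/- Let M₂(a) denote the number of pairs (n,k) of positive integers with 1 ≤ k ≤ n such that the Stirling number of the second kind S(n,k) equals a. Then, as a → ∞, M₂(a) = O( log a / (log log a − log log log a) ). -/

import Mathlib

/-- Stirling numbers of the second kind, defined by the standard recurrence:
`S(0,0) = 1`, `S(n,0) = 0` for `n ≥ 1`, `S(0,k) = 0` for `k ≥ 1`, and
`S(n+1,k+1) = S(n,k) + (k+1) * S(n,k+1)`. -/
def stirling2 : ℕ → ℕ → ℕ
  | 0, 0 => 1
  | 0, _ + 1 => 0
  | _ + 1, 0 => 0
  | n + 1, k + 1 => stirling2 n k + (k + 1) * stirling2 n (k + 1)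

lemma stirling2_eq_zero {n k : ℕ} (h : n < k) : stirling2 n k = 0 := by
  induction n generalizing k with
  | zero => obtain ⟨j, rfl⟩ := Nat.exists_eq_add_of_lt h; rfl
  | succ n ih =>
    obtain ⟨j, rfl⟩ : ∃ j, k = j + 1 := ⟨k - 1, by omega⟩
    show stirling2 n j + (j + 1) * stirling2 n (j + 1) = 0
    rw [ih (by omega), ih (by omega)]
    ring

lemma stirling2_self (n : ℕ) : stirling2 n n = 1 := by
  induction n with
  | zero => rfl
  | succ n ih =>
    show stirling2 n n + (n+1) * stirling2 n (n+1) = 1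
    rw [ih, stirling2_eq_zero (by omega)]
    ring

lemma stirling2_one {n : ℕ} (h : 1 ≤ n) : stirling2 n 1 = 1 := by
  induction n with
  | zero => omega
  | succ n ih =>
    show stirling2 n 0 + 1 * stirling2 n 1 = 1
    rcases Nat.eq_zero_or_pos n with rfl | hn
    · rfl
    · obtain ⟨m, rfl⟩ : ∃ m, n = m + 1 := ⟨n - 1, by omega⟩
      rw [ih (by omega)]; rfl

lemma stirling2_pos {n k : ℕ} (h1 : 1 ≤ k) (h : k ≤ n) : 0 < stirling2 n k := by
  induction n generalizing k with
  | zero => omega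
  | succ n ih =>
    obtain ⟨j, rfl⟩ : ∃ j, k = j + 1 := ⟨k - 1, by omega⟩
    show 0 < stirling2 n j + (j + 1) * stirling2 n (j + 1)
    rcases Nat.eq_zero_or_pos j with rfl | hj
    · rcases Nat.eq_zero_or_pos n with rfl | hn
      · norm_num [stirling2]
      · have := ih (k := 1) (by omega) (by omega)
        have hnn : (0:ℕ) < (0 + 1) * stirling2 n (0 + 1) := by
          simpa using this
        omega
    · have := ih (k := j) (by omega) (by omega)
      omega

lemma stirling2_pow_le {k d : ℕ} : k ^ d ≤ stirling2 (k + d) k := by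
  induction d generalizing k with
  | zero => simp [stirling2_self]
  | succ d ih =>
    rcases Nat.eq_zero_or_pos k with rfl | hk
    · simp
    · obtain ⟨j, rfl⟩ : ∃ j, k = j + 1 := ⟨k - 1, by omega⟩
      have : stirling2 (j + 1 + (d+1)) (j+1)
          = stirling2 (j + 1 + d) j + (j + 1) * stirling2 (j + 1 + d) (j + 1) := by
        show stirling2 ((j + 1 + d) + 1) (j + 1) = _
        rfl
      rw [this]
      calc (j+1)^(d+1) = (j+1) * (j+1)^d := by ring
        _ ≤ (j+1) * stirling2 (j + 1 + d) (j+1) := by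
            exact Nat.mul_le_mul_left _ ih
        _ ≤ _ := Nat.le_add_left _ _

lemma stirling2_lt_right {k m n : ℕ} (h2 : 2 ≤ k) (hm : k ≤ m) (hn : m < n) :
    stirling2 m k < stirling2 n k := by
  induction n with
  | zero => omega
  | succ n ih =>
    obtain ⟨j, rfl⟩ : ∃ j, k = j + 1 := ⟨k - 1, by omega⟩
    have key : stirling2 n (j+1) < stirling2 (n+1) (j+1) := by
      show stirling2 n (j+1) < stirling2 n j + (j + 1) * stirling2 n (j + 1)
      have h1 : 0 < stirling2 n (j+1) := stirling2_pos (by omega) (by omega)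
      nlinarith
    rcases Nat.lt_or_ge m n with h | h
    · exact (ih h).trans key
    · have : m = n := by omega
      subst this; exact key

lemma stirling2_lt_diag {k j d : ℕ} (hd : 1 ≤ d) (hkj : k < j) :
    stirling2 (k + d) k < stirling2 (j + d) j := by
  induction j with
  | zero => omega
  | succ j ih =>
    have key : stirling2 (j + d) j < stirling2 (j + 1 + d) (j+1) := by
      have heq : j + 1 + d = (j + d) + 1 := by omega
      rw [heq]
      show stirling2 (j + d) j + (j + 1) * stirling2 (j + d) (j + 1) > _
      have h1 : 0 < stirling2 (j + d) (j+1) := stirling2_pos (by omega) (by omega)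
      nlinarith
    rcases Nat.lt_or_ge k j with h | h
    · exact (ih h).trans key
    · have : k = j := by omega
      subst this; exact key

/-- `M₂ a` is the number of pairs `(n, k)` with `1 ≤ k ≤ n` and `S(n, k) = a`. -/
noncomputable def M2 (a : ℕ) : ℕ :=
  Nat.card {p : ℕ × ℕ // 1 ≤ p.2 ∧ p.2 ≤ p.1 ∧ stirling2 p.1 p.2 = a}

lemma mem_facts {a n k : ℕ} (ha : 2 ≤ a) (h1 : 1 ≤ k) (h2 : k ≤ n)
    (h3 : stirling2 n k = a) : 2 ≤ k ∧ k + 1 ≤ n := by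
  constructor
  · by_contra h
    have : k = 1 := by omega
    subst this
    rw [stirling2_one (by omega)] at h3; omega
  · by_contra h
    have : n = k := by omega
    subst this
    rw [stirling2_self] at h3; omega

lemma right_inj {a m n k : ℕ} (h2 : 2 ≤ k) (hm : k ≤ m) (hn : k ≤ n)
    (hma : stirling2 m k = a) (hna : stirling2 n k = a) : m = n := by
  rcases lt_trichotomy m n with h | h | h
  · have := stirling2_lt_right h2 hm h; omega
  · exact h
  · have := stirling2_lt_right h2 hn h; omega

lemma diag_inj {a k j d : ℕ} (hd : 1 ≤ d)
    (hka : stirling2 (k + d) k = a) (hja : stirling2 (j + d) j = a) : k = j := by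
  rcases lt_trichotomy k j with h | h | h
  · have := stirling2_lt_diag hd h; omega
  · exact h
  · have := stirling2_lt_diag hd h; omega

lemma M2_le {a : ℕ} (K : ℕ) (ha : 2 ≤ a) (hK : 1 ≤ K) :
    M2 a ≤ K + Nat.log (K + 1) a := by
  set D := Nat.log (K + 1) a with hD
  set N := K + D with hN
  have hbd : ∀ p : {p : ℕ × ℕ // 1 ≤ p.2 ∧ p.2 ≤ p.1 ∧ stirling2 p.1 p.2 = a},
      (if p.1.2 ≤ K + 1 then p.1.2 - 2 else K + (p.1.1 - p.1.2) - 1) < N := by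
    rintro ⟨⟨n, k⟩, h1, h2, h3⟩
    obtain ⟨hk2, hkn⟩ := mem_facts ha h1 h2 h3
    dsimp only
    split_ifs with h
    · omega
    · have hd1 : 1 ≤ n - k := by omega
      have hdD : n - k ≤ D := by
        rw [hD, Nat.le_log_iff_pow_le (by omega) (by omega)]
        calc (K + 1) ^ (n - k) ≤ k ^ (n - k) := Nat.pow_le_pow_left (by omega) _
          _ ≤ stirling2 (k + (n - k)) k := stirling2_pow_le
          _ = a := by rw [show k + (n - k) = n by omega, h3]
      omega
  have key : Nat.card {p : ℕ × ℕ // 1 ≤ p.2 ∧ p.2 ≤ p.1 ∧ stirling2 p.1 p.2 = a}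
      ≤ Nat.card (Fin N) := by
    apply Nat.card_le_card_of_injective (fun p => (⟨_, hbd p⟩ : Fin N))
    rintro ⟨⟨n, k⟩, h1, h2, h3⟩ ⟨⟨m, j⟩, g1, g2, g3⟩ heq
    obtain ⟨hk2, hkn⟩ := mem_facts ha h1 h2 h3
    obtain ⟨hj2, hjm⟩ := mem_facts ha g1 g2 g3
    simp only [Fin.mk.injEq] at heq
    split_ifs at heq with hA hB hB
    · -- both small: k = j
      have hkj : k = j := by omega
      subst hkj
      have := right_inj hk2 h2 g2 h3 g3
      simp only [Subtype.mk.injEq, Prod.mk.injEq]; exact ⟨this, trivial⟩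
    · omega
    · omega
    · -- both large: d equal
      have hdd : n - k = m - j := by omega
      have := diag_inj (a := a) (d := n - k) (by omega)
        (by rw [show k + (n - k) = n by omega]; exact h3)
        (by rw [hdd, show j + (m - j) = m by omega]; exact g3)
      subst this
      have := right_inj hk2 h2 g2 h3 g3
      simp only [Subtype.mk.injEq, Prod.mk.injEq]; exact ⟨this, trivial⟩
  show Nat.card {p : ℕ × ℕ // 1 ≤ p.2 ∧ p.2 ≤ p.1 ∧ stirling2 p.1 p.2 = a} ≤ N
  simpa using key

open Filter Real Asymptotics

set_option maxHeartbeats 1600000 in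
/-- As `a → ∞`, `M₂(a) = O(log a / (log log a − log log log a))`. -/
theorem M2_isBigO :
    (fun a : ℕ => (M2 a : ℝ)) =O[Filter.atTop]
      fun a : ℕ =>
        Real.log a / (Real.log (Real.log a) - Real.log (Real.log (Real.log a))) := by
  have hlog : Tendsto (fun a : ℕ => Real.log a) atTop atTop :=
    Real.tendsto_log_atTop.comp tendsto_natCast_atTop_atTop
  -- eventual smallness of log x vs sqrt x
  have hC2 : ∀ᶠ x : ℝ in atTop, Real.log x ≤ (1/4) * Real.sqrt x := by
    have := (isLittleO_log_rpow_atTop (by norm_num : (0:ℝ) < 1/2)).def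
      (by norm_num : (0:ℝ) < 1/4)
    filter_upwards [this, eventually_ge_atTop (1:ℝ)] with x hx hx1
    have h0 : (0:ℝ) ≤ x := by linarith
    have hlx : 0 ≤ Real.log x := Real.log_nonneg hx1
    rw [Real.norm_eq_abs, Real.norm_eq_abs, abs_of_nonneg hlx,
      abs_of_nonneg (Real.rpow_nonneg h0 _)] at hx
    rwa [Real.sqrt_eq_rpow]
  rw [isBigO_iff]
  refine ⟨5, ?_⟩
  filter_upwards [eventually_ge_atTop 2, hlog.eventually (eventually_ge_atTop (3:ℝ)),
    hlog.eventually hC2, hlog.eventually (eventually_ge_atTop (16:ℝ))]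
    with a ha2 hx3 hx2 hx16
  set x := Real.log a with hxdef
  set L := Real.log x with hLdef
  set M := Real.log L with hMdef
  have hx1 : (1:ℝ) ≤ x := by linarith
  have hL1 : (1:ℝ) ≤ L := by
    rw [hLdef]
    calc (1:ℝ) = Real.log (Real.exp 1) := by simp
      _ ≤ Real.log x := Real.log_le_log (Real.exp_pos 1) (by
          have : Real.exp 1 ≤ 3 := by
            have := Real.exp_one_lt_d9
            linarith
          linarith)
  have hM0 : 0 ≤ M := Real.log_nonneg hL1
  have hML : M ≤ L - 1 := by
    have := Real.log_le_sub_one_of_pos (show (0:ℝ) < L by linarith)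
    linarith
  have hLM : 0 < L - M := by linarith
  have hsx : Real.sqrt x ≤ x := by
    nlinarith [Real.sq_sqrt (by linarith : (0:ℝ) ≤ x), Real.sqrt_nonneg x,
      Real.sqrt_le_sqrt hx1, Real.sqrt_one]
  set K := Nat.sqrt (Nat.log 2 a) + 1 with hKdef
  -- combinatorial bound
  have hmain : (M2 a : ℝ) ≤ K + Nat.log (K + 1) a := by
    have := M2_le K ha2 (by omega)
    exact_mod_cast this
  -- K is small
  have hNatlog2_le : (Nat.log 2 a : ℝ) ≤ 2 * x := by
    have h1 : (Nat.log 2 a : ℝ) ≤ Real.logb 2 a := Real.natLog_le_logb a 2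
    have h2 : Real.logb 2 a = x / Real.log 2 := by rw [Real.logb, hxdef]
    have h3 : (1:ℝ)/2 ≤ Real.log 2 := by
      have := Real.log_two_gt_d9; linarith
    have h4 : x / Real.log 2 ≤ 2 * x := by
      rw [div_le_iff₀ (by linarith)]
      nlinarith
    linarith
  have hK_sqrt : (K : ℝ) ≤ 2 * Real.sqrt x + 1 := by
    have h1 : (Nat.sqrt (Nat.log 2 a) : ℝ) ≤ Real.sqrt (Nat.log 2 a) := by
      rw [show ((Nat.sqrt (Nat.log 2 a) : ℝ)) = Real.sqrt ((Nat.sqrt (Nat.log 2 a))^2) by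
        rw [Real.sqrt_sq (by positivity)]]
      apply Real.sqrt_le_sqrt
      exact_mod_cast Nat.sqrt_le' (Nat.log 2 a)
    have h2 : Real.sqrt (Nat.log 2 a) ≤ Real.sqrt (2 * x) := Real.sqrt_le_sqrt hNatlog2_le
    have h3 : Real.sqrt (2 * x) ≤ 2 * Real.sqrt x := by
      rw [Real.sqrt_mul (by norm_num : (0:ℝ) ≤ 2) x]
      have : Real.sqrt 2 ≤ 2 := by
        nlinarith [Real.sq_sqrt (by norm_num : (0:ℝ) ≤ 2), Real.sqrt_nonneg 2]
      nlinarith [Real.sqrt_nonneg x]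
    push_cast [hKdef]
    linarith
  have hK_le : (K : ℝ) ≤ x / L := by
    rw [le_div_iff₀ (by linarith)]
    have hsqn := Real.sqrt_nonneg x
    have hL0 : (0:ℝ) ≤ L := by linarith
    have e1 : (K:ℝ) * L ≤ (2 * Real.sqrt x + 1) * L :=
      mul_le_mul_of_nonneg_right hK_sqrt hL0
    have e2 : (2 * Real.sqrt x + 1) * L ≤ (2 * Real.sqrt x + 1) * ((1/4) * Real.sqrt x) :=
      mul_le_mul_of_nonneg_left hx2 (by linarith)
    have e3 := Real.sq_sqrt (show (0:ℝ) ≤ x by linarith)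
    nlinarith
  -- log (K+1) is at least L/4
  have hs_lb : x - 1 ≤ (Nat.log 2 a : ℝ) := by
    have h := Nat.lt_pow_succ_log_self (by norm_num : 1 < 2) a
    have h2 : (a:ℝ) < 2 ^ (Nat.log 2 a + 1) := by exact_mod_cast h
    have h3 : x ≤ Real.log (2 ^ (Nat.log 2 a + 1)) := by
      rw [hxdef]
      apply Real.log_le_log (by positivity)
      linarith
    rw [Real.log_pow] at h3
    have h4 : Real.log 2 ≤ 1 := by
      have := Real.log_two_lt_d9; linarith
    have h5 : (Nat.log 2 a + 1 : ℝ) * Real.log 2 ≤ Nat.log 2 a + 1 := by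
      have : (0:ℝ) ≤ (Nat.log 2 a + 1 : ℝ) := by positivity
      nlinarith
    push_cast at h3 h5 ⊢
    linarith
  have hK1_lb : Real.sqrt x / 2 ≤ ((K : ℝ) + 1) := by
    have h1 : Real.sqrt (x - 1) ≤ (Nat.sqrt (Nat.log 2 a) : ℝ) + 1 := by
      have ha' : ((Nat.log 2 a : ℕ) : ℝ) < ((Nat.sqrt (Nat.log 2 a) + 1 : ℕ) : ℝ)^2 := by
        exact_mod_cast Nat.lt_succ_sqrt' (Nat.log 2 a)
      calc Real.sqrt (x - 1) ≤ Real.sqrt ((Nat.log 2 a : ℝ)) := Real.sqrt_le_sqrt hs_lb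
        _ ≤ Real.sqrt (((Nat.sqrt (Nat.log 2 a) + 1 : ℕ) : ℝ)^2) :=
            Real.sqrt_le_sqrt (le_of_lt ha')
        _ = ((Nat.sqrt (Nat.log 2 a) + 1 : ℕ) : ℝ) := Real.sqrt_sq (by positivity)
        _ = (Nat.sqrt (Nat.log 2 a) : ℝ) + 1 := by push_cast; ring
    have h2 : Real.sqrt x / 2 ≤ Real.sqrt (x - 1) := by
      have e1 : Real.sqrt x ≤ Real.sqrt (4 * (x - 1)) :=
        Real.sqrt_le_sqrt (by linarith)
      have e2 : Real.sqrt (4 * (x - 1)) = 2 * Real.sqrt (x - 1) := by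
        rw [Real.sqrt_mul (by norm_num : (0:ℝ) ≤ 4) (x-1),
          show Real.sqrt 4 = 2 by
            rw [show (4:ℝ) = 2^2 by norm_num, Real.sqrt_sq (by norm_num)]]
      rw [e2] at e1
      linarith
    push_cast [hKdef]
    linarith
  have hlogK : L / 4 ≤ Real.log ((K : ℝ) + 1) := by
    have h0 : (0:ℝ) < Real.sqrt x / 2 := by
      have : (0:ℝ) < Real.sqrt x := Real.sqrt_pos.2 (by linarith)
      linarith
    have h1 : Real.log (Real.sqrt x / 2) ≤ Real.log ((K:ℝ) + 1) :=
      Real.log_le_log h0 hK1_lb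
    have h2 : Real.log (Real.sqrt x / 2) = Real.log x / 2 - Real.log 2 := by
      rw [Real.log_div (by positivity) (by norm_num), Real.log_sqrt (by linarith)]
    have h3 : 4 * Real.log 2 ≤ L := by
      have e1 : Real.log 16 ≤ L := by
        rw [hLdef]
        exact Real.log_le_log (by norm_num) hx16
      have e2 : Real.log 16 = 4 * Real.log 2 := by
        rw [show (16:ℝ) = 2^4 by norm_num, Real.log_pow]
        push_cast; ring
      linarith
    rw [hLdef] at h3 ⊢
    linarith
  -- the Nat.log term
  have hNatlogK : (Nat.log (K + 1) a : ℝ) ≤ 4 * (x / L) := by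
    have h1 : (Nat.log (K + 1) a : ℝ) ≤ Real.logb ((K:ℝ) + 1) a := by
      have := Real.natLog_le_logb a (K+1)
      rwa [Nat.cast_add, Nat.cast_one] at this
    have h2 : Real.logb ((K:ℝ) + 1) (a:ℝ) = x / Real.log ((K:ℝ)+1) := by
      rw [Real.logb, hxdef]
    have hLK : (0:ℝ) < L / 4 := by linarith
    have h3 : x / Real.log ((K:ℝ)+1) ≤ x / (L/4) :=
      div_le_div_of_nonneg_left (by linarith) hLK hlogK
    have h4 : x / (L/4) = 4 * (x/L) := by field_simp
    calc (Nat.log (K + 1) a : ℝ) ≤ Real.logb ((K:ℝ)+1) a := h1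
      _ = x / Real.log ((K:ℝ)+1) := h2
      _ ≤ x / (L/4) := h3
      _ = 4 * (x/L) := h4
  -- combine
  have htot : (M2 a : ℝ) ≤ 5 * (x / L) := by
    have := hmain
    have h5 : (M2 a : ℝ) ≤ (x/L) + 4 * (x/L) := by linarith
    linarith
  have hfin : 5 * (x/L) ≤ 5 * (x / (L - M)) := by
    have : x / L ≤ x / (L - M) :=
      div_le_div_of_nonneg_left (by linarith) hLM (by linarith)
    linarith
  have hpos : 0 ≤ x / (L - M) := by positivity
  rw [Real.norm_eq_abs, Real.norm_eq_abs, abs_of_nonneg (by positivity : (0:ℝ) ≤ (M2 a:ℝ)),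
    abs_of_nonneg hpos]
  calc (M2 a:ℝ) ≤ 5 * (x/L) := htot
    _ ≤ 5 * (x/(L-M)) := hfin
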